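/- For all natural numbers a, k, l, n with a ≤ k ≤ l ≤ n and n ≥ 1, one has C(l, l + a − k)·n^a ≤ C(k, a)·n^{l + a − k}. -/

import Mathlib

/-- For all natural numbers `a ≤ k ≤ l ≤ n` with `n ≥ 1`,
`C(l, l + a − k)·n^a ≤ C(k, a)·n^(l + a − k)`. -/
theorem choose_shift_bound (a k l n : ℕ) (hak : a ≤ k) (hkl : k ≤ l) (hln : l ≤ n)
    (hn : 1 ≤ n) :
    l.choose (l + a - k) * n ^ a ≤ k.choose a * n ^ (l + a - k) := by
  set m := l - k with hm
  have h1 : l + a - k = a + m := by omega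
  rw [h1]
  have hid : l.choose (a + m) * (a + m).choose m = l.choose m * k.choose a := by
    have := Nat.choose_mul (n := l) (k := a + m) (s := m) (by omega)
    simpa [show l - m = k by omega, show a + m - m = a by omega] using this
  have hle : l.choose (a + m) ≤ k.choose a * l.choose m := by
    calc l.choose (a + m) ≤ l.choose (a + m) * (a + m).choose m :=
          Nat.le_mul_of_pos_right _ (Nat.choose_pos (by omega))
      _ = l.choose m * k.choose a := hid
      _ = k.choose a * l.choose m := Nat.mul_comm _ _
  have hlm : l.choose m ≤ n ^ m :=
    le_trans (Nat.choose_le_pow l m) (Nat.pow_le_pow_left hln m)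
  calc l.choose (a + m) * n ^ a ≤ (k.choose a * n ^ m) * n ^ a :=
        Nat.mul_le_mul_right _ (le_trans hle (Nat.mul_le_mul_left _ hlm))
    _ = k.choose a * n ^ (a + m) := by ring
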